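/- If a topological space X has a pairwise disjoint family U of nonempty open subsets each of which is meager in itself, and ⋃U is dense in X, then X is meager in itself. -/
import Mathlib

open Set TopologicalSpace

/-- If `u` is open and `t` is nowhere dense in the subspace `u`, then its image is
nowhere dense in the ambient space. -/
lemma aux_nwd_of_subtype {X : Type*} [TopologicalSpace X] {u : Set X} (hu : IsOpen u)
    {t : Set ↥u} (ht : IsNowhereDense t) : IsNowhereDense ((↑) '' t : Set X) := by
  by_contra h
  rw [IsNowhereDense, ← ne_eq, ← nonempty_iff_ne_empty] at h
  -- interior of closure is open nonempty, meets the image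
  have hIo : IsOpen (interior (closure ((↑) '' t : Set X))) := isOpen_interior
  have hmeets : ((interior (closure ((↑) '' t : Set X))) ∩ ((↑) '' t : Set X)).Nonempty := by
    rcases h with ⟨x, hx⟩
    have := mem_closure_iff.mp (interior_subset hx) _ hIo hx
    exact this
  rcases hmeets with ⟨y, hyI, hyt⟩
  have hyu : y ∈ u := by rcases hyt with ⟨z, _, rfl⟩; exact z.2
  -- W is open nonempty inside u
  set W : Set X := interior (closure ((↑) '' t : Set X)) ∩ u with hW
  have hWo : IsOpen W := hIo.inter hu
  -- pull back to the subtype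
  have hsub : (Subtype.val ⁻¹' W : Set ↥u) ⊆ closure t := by
    intro z hz
    have hcl : (z : X) ∈ closure ((↑) '' t : Set X) := interior_subset hz.1
    rw [Topology.IsInducing.subtypeVal.closure_eq_preimage_closure_image t]
    exact hcl
  have hWop : IsOpen (Subtype.val ⁻¹' W : Set ↥u) := hWo.preimage continuous_subtype_val
  have : (⟨y, hyu⟩ : ↥u) ∈ interior (closure t) :=
    interior_maximal hsub hWop ⟨hyI, hyu⟩
  rw [ht] at this
  exact this

theorem stmt13 {X : Type*} [TopologicalSpace X] (U : Set (Set X))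
    (hdisj : U.PairwiseDisjoint id) (hopen : ∀ u ∈ U, IsOpen u)
    (hne : ∀ u ∈ U, u.Nonempty)
    (hmeager : ∀ u ∈ U, IsMeagre (Set.univ : Set ↥u))
    (hdense : Dense (⋃₀ U)) :
    IsMeagre (Set.univ : Set X) := by
  classical
  -- Step 1: for each u ∈ U choose a sequence of nowhere dense sets covering u
  have key : ∀ u ∈ U, ∃ f : ℕ → Set X,
      (∀ n, f n ⊆ u ∧ IsNowhereDense (f n)) ∧ u ⊆ ⋃ n, f n := by
    intro u hu
    obtain ⟨S, hSnd, hSc, hScov⟩ :=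
      isMeagre_iff_countable_union_isNowhereDense.mp (hmeager u hu)
    obtain ⟨g, hg⟩ := (hSc.insert ∅).exists_eq_range (insert_nonempty _ _)
    refine ⟨fun n => (↑) '' g n, fun n => ⟨?_, ?_⟩, ?_⟩
    · rintro x ⟨z, _, rfl⟩; exact z.2
    · have hgn : g n ∈ insert ∅ S := hg ▸ mem_range_self n
      rcases hgn with h | h
      · simp [h]
      · exact aux_nwd_of_subtype (hopen u hu) (hSnd _ h)
    · intro x hx
      have : (⟨x, hx⟩ : ↥u) ∈ ⋃₀ S := hScov (mem_univ _)
      rcases this with ⟨s, hsS, hzs⟩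
      have : s ∈ range g := by rw [← hg]; exact mem_insert_of_mem _ hsS
      rcases this with ⟨n, rfl⟩
      exact mem_iUnion.mpr ⟨n, ⟨⟨x, hx⟩, hzs, rfl⟩⟩
  choose! f hf1 hf2 using key
  -- Step 2: the n-th slice across all u's
  set M : ℕ → Set X := fun n => ⋃ u ∈ U, f u n with hM
  have hMnd : ∀ n, IsNowhereDense (M n) := by
    intro n
    by_contra h
    rw [IsNowhereDense, ← ne_eq, ← nonempty_iff_ne_empty] at h
    set V : Set X := interior (closure (M n)) with hV
    have hVo : IsOpen V := isOpen_interior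
    have hmeets : (V ∩ M n).Nonempty := by
      rcases h with ⟨x, hx⟩
      exact mem_closure_iff.mp (interior_subset hx) _ hVo hx
    rcases hmeets with ⟨x, hxV, hxM⟩
    rcases mem_iUnion₂.mp hxM with ⟨u, hu, hxu⟩
    have hxu' : x ∈ u := (hf1 u hu n).1 hxu
    -- V ∩ u is open nonempty and contained in closure (f u n)
    have hsub : V ∩ u ⊆ closure (f u n) := by
      rintro y ⟨hyV, hyu⟩
      rw [mem_closure_iff]
      intro W hWo hyW
      have hyW' : y ∈ W ∩ u := ⟨hyW, hyu⟩
      have hWu : IsOpen (W ∩ u) := hWo.inter (hopen u hu)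
      have : ((W ∩ u) ∩ M n).Nonempty :=
        mem_closure_iff.mp (interior_subset hyV) _ hWu hyW'
      rcases this with ⟨z, ⟨hzW, hzu⟩, hzM⟩
      rcases mem_iUnion₂.mp hzM with ⟨v, hv, hzv⟩
      have hzv' : z ∈ v := (hf1 v hv n).1 hzv
      have huv : u = v := by
        by_contra hne'
        exact (hdisj hu hv hne').ne_of_mem hzu hzv' rfl
      exact ⟨z, hzW, huv ▸ hzv⟩
    have : x ∈ interior (closure (f u n)) :=
      interior_maximal hsub (hVo.inter (hopen u hu)) ⟨hxV, hxu'⟩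
    rw [(hf1 u hu n).2] at this
    exact this
  -- Step 3: the complement of ⋃₀ U is nowhere dense
  have hUo : IsOpen (⋃₀ U) := isOpen_sUnion hopen
  have hcnd : IsNowhereDense ((⋃₀ U)ᶜ) := by
    have hcl : IsClosed ((⋃₀ U)ᶜ) := hUo.isClosed_compl
    rw [hcl.isNowhereDense_iff, interior_compl, hdense.closure_eq, compl_univ]
  -- Step 4: conclude
  rw [isMeagre_iff_countable_union_isNowhereDense]
  refine ⟨insert ((⋃₀ U)ᶜ) (range M), ?_, ?_, ?_⟩
  · rintro t (h | ⟨n, rfl⟩)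
    · exact h ▸ hcnd
    · exact hMnd n
  · exact (countable_range M).insert _
  · intro x _
    by_cases hx : x ∈ ⋃₀ U
    · rcases hx with ⟨u, hu, hxu⟩
      rcases mem_iUnion.mp (hf2 u hu hxu) with ⟨n, hn⟩
      exact ⟨M n, mem_insert_of_mem _ (mem_range_self n), mem_iUnion₂.mpr ⟨u, hu, hn⟩⟩
    · exact ⟨_, mem_insert _ _, hx⟩
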